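/- Let n ≥ 1 and let f : ℝⁿ → ℝ be differentiable with gradient ∇f. Let x ∈ ℝⁿ, let H be an n×n real symmetric positive-definite matrix, and set d = −H ∇f(x). Let L_g > 0 be such that ‖∇f(x + τ d) − ∇f(x)‖ ≤ L_g τ ‖d‖ for all τ ∈ [0,1]. Let 0 < η₁ < 1, and define q = f(x) + ∇f(x)ᵀ d + (1/2) dᵀ H⁻¹ d. If λ_min(H⁻¹) ≥ L_g/(2 − η₁), then f(x) − f(x + d) ≥ η₁ (f(x) − q); that is, the trust-region-type ratio r = (f(x) − f(x+d))/(f(x) − q) is at least η₁ whenever f(x) > q. -/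

import Mathlib

open scoped RealInnerProductSpace

theorem quad_lower_aux (n : ℕ) (M : Matrix (Fin n) (Fin n) ℝ) (hM : M.IsHermitian) (c : ℝ)
    (hc : ∀ i, c ≤ hM.eigenvalues i) (v : EuclideanSpace ℝ (Fin n)) :
    c * ‖v‖^2 ≤ ⟪v, Matrix.toEuclideanLin M v⟫ := by
  have hU : (hM.eigenvectorUnitary : Matrix (Fin n) (Fin n) ℝ) *
      (hM.eigenvectorUnitary : Matrix (Fin n) (Fin n) ℝ).conjTranspose = 1 := by
    have := Matrix.mem_unitaryGroup_iff.mp hM.eigenvectorUnitary.2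
    simpa [Matrix.star_eq_conjTranspose] using this
  have hsd : (M - c • 1).PosSemidef := by
    have hdd : Matrix.diagonal (fun i => hM.eigenvalues i - c)
        = Matrix.diagonal (RCLike.ofReal ∘ hM.eigenvalues) - c • (1 : Matrix (Fin n) (Fin n) ℝ) := by
      ext i j
      by_cases h : i = j <;> simp [h, Matrix.one_apply, Matrix.diagonal_apply]
    have h1 : M - c • 1 = (hM.eigenvectorUnitary : Matrix (Fin n) (Fin n) ℝ) *
        Matrix.diagonal (fun i => hM.eigenvalues i - c) *
        (hM.eigenvectorUnitary : Matrix (Fin n) (Fin n) ℝ).conjTranspose := by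
      rw [hdd, Matrix.mul_sub, Matrix.sub_mul]
      rw [Matrix.mul_smul, Matrix.mul_one, Matrix.smul_mul, hU]
      conv_lhs => rw [hM.spectral_theorem]
      simp [Matrix.star_eq_conjTranspose]
    rw [h1]
    exact (Matrix.posSemidef_diagonal_iff.mpr fun i => sub_nonneg.2 (hc i)).mul_mul_conjTranspose_same _
  have key := hsd.dotProduct_mulVec_nonneg ((WithLp.equiv 2 _) v)
  simp only [RCLike.re_to_real, Matrix.sub_mulVec, dotProduct_sub,
    Matrix.smul_mulVec, Matrix.one_mulVec, dotProduct_smul, smul_eq_mul,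
    star_trivial, sub_nonneg] at key
  have h2 : ⟪v, Matrix.toEuclideanLin M v⟫
      = dotProduct ((WithLp.equiv 2 _) v) (M.mulVec ((WithLp.equiv 2 _) v)) := by
    simp [PiLp.inner_apply, RCLike.inner_apply, dotProduct,
      Matrix.toEuclideanLin_apply]
    exact Finset.sum_congr rfl fun _ _ => mul_comm _ _
  have h3 : ‖v‖^2 = dotProduct ((WithLp.equiv 2 _) v) ((WithLp.equiv 2 _) v) := by
    rw [← real_inner_self_eq_norm_sq]
    simp [PiLp.inner_apply, RCLike.inner_apply, dotProduct]
    rw [EuclideanSpace.norm_sq_eq]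
    exact Finset.sum_congr rfl fun i _ => by rw [Real.norm_eq_abs, sq_abs, sq]
  rw [h2, h3]
  exact key

theorem descent_aux (n : ℕ) (f : EuclideanSpace ℝ (Fin n) → ℝ) (hf : Differentiable ℝ f)
    (x d : EuclideanSpace ℝ (Fin n)) (L : ℝ)
    (hlip : ∀ τ ∈ Set.Icc (0:ℝ) 1, ‖gradient f (x + τ • d) - gradient f x‖ ≤ L * τ * ‖d‖) :
    f (x + d) ≤ f x + ⟪gradient f x, d⟫ + L / 2 * ‖d‖^2 := by
  set φ : ℝ → ℝ := fun τ => f (x + τ • d) - τ * ⟪gradient f x, d⟫ - L * ‖d‖^2 * τ^2 / 2 with hφ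
  have hφ' : ∀ τ : ℝ, HasDerivAt φ
      (⟪gradient f (x + τ • d), d⟫ - ⟪gradient f x, d⟫ - L * ‖d‖^2 * τ) τ := by
    intro τ
    have hc : HasDerivAt (fun τ : ℝ => x + τ • d) d τ := by
      simpa using ((hasDerivAt_id τ).smul_const d).const_add x
    have h1 : HasDerivAt (fun τ : ℝ => f (x + τ • d)) ⟪gradient f (x + τ • d), d⟫ τ := by
      have hfd := ((hf (x + τ • d)).hasGradientAt).hasFDerivAt
      have h := hfd.comp_hasDerivAt τ hc
      rw [InnerProductSpace.toDual_apply_apply] at h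
      exact h
    have h2 : HasDerivAt (fun τ : ℝ => τ * ⟪gradient f x, d⟫) ⟪gradient f x, d⟫ τ := by
      simpa using (hasDerivAt_id τ).mul_const (⟪gradient f x, d⟫ : ℝ)
    have h3 : HasDerivAt (fun τ : ℝ => L * ‖d‖^2 * τ^2 / 2) (L * ‖d‖^2 * τ) τ := by
      have := ((hasDerivAt_pow 2 τ).const_mul (L * ‖d‖^2)).div_const 2
      simpa using this.congr_deriv (by ring)
    exact (h1.sub h2).sub h3
  have hanti : AntitoneOn φ (Set.Icc 0 1) := by
    apply antitoneOn_of_deriv_nonpos (convex_Icc 0 1)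
    · exact Continuous.continuousOn (by
        exact continuous_iff_continuousAt.mpr fun τ => (hφ' τ).continuousAt)
    · exact fun τ _ => ((hφ' τ).differentiableAt).differentiableWithinAt
    · intro τ hτ
      rw [interior_Icc] at hτ
      rw [(hφ' τ).deriv]
      have hττ : τ ∈ Set.Icc (0:ℝ) 1 := ⟨le_of_lt hτ.1, le_of_lt hτ.2⟩
      have hb := hlip τ hττ
      have hin : ⟪gradient f (x + τ • d), d⟫ - ⟪gradient f x, d⟫
          = ⟪gradient f (x + τ • d) - gradient f x, d⟫ := (inner_sub_left _ _ _).symm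
      have hcs : ⟪gradient f (x + τ • d) - gradient f x, d⟫
          ≤ ‖gradient f (x + τ • d) - gradient f x‖ * ‖d‖ := real_inner_le_norm _ _
      have hnn : (0:ℝ) ≤ ‖d‖ := norm_nonneg d
      nlinarith [hcs, hb, hin]
  have h01 := hanti (Set.left_mem_Icc.mpr zero_le_one) (Set.right_mem_Icc.mpr zero_le_one) zero_le_one
  simp only [hφ, one_smul, zero_smul, add_zero, zero_mul, one_pow, mul_one] at h01
  nlinarith [h01]

theorem regularized_ratio_termination (n : ℕ) (hn : 1 ≤ n)
    (f : EuclideanSpace ℝ (Fin n) → ℝ) (hf : Differentiable ℝ f)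
    (x : EuclideanSpace ℝ (Fin n))
    (H : Matrix (Fin n) (Fin n) ℝ) (hH : H.PosDef)
    (d : EuclideanSpace ℝ (Fin n))
    (hd : d = -(Matrix.toEuclideanLin H (gradient f x)))
    (L_g : ℝ) (hLg : 0 < L_g)
    (hlip : ∀ τ ∈ Set.Icc (0 : ℝ) 1,
      ‖gradient f (x + τ • d) - gradient f x‖ ≤ L_g * τ * ‖d‖)
    (η₁ : ℝ) (hη₁ : 0 < η₁) (hη₁' : η₁ < 1)
    (q : ℝ)
    (hq : q = f x + ⟪gradient f x, d⟫
        + (1 / 2) * ⟪d, Matrix.toEuclideanLin H⁻¹ d⟫)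
    (heig : ∀ i : Fin n, L_g / (2 - η₁) ≤ (hH.inv.1.eigenvalues i : ℝ)) :
    f x - f (x + d) ≥ η₁ * (f x - q) := by
  have hinv : ∀ w : EuclideanSpace ℝ (Fin n),
      Matrix.toEuclideanLin H⁻¹ (Matrix.toEuclideanLin H w) = w := by
    intro w
    have h1 : H⁻¹ * H = 1 :=
      Matrix.nonsing_inv_mul H (Matrix.isUnit_iff_isUnit_det H |>.mp hH.isUnit)
    have := congrArg (fun M => Matrix.toEuclideanLin M w) h1
    simpa [Matrix.toEuclideanLin_apply, Matrix.mulVec_mulVec] using this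
  have hg : gradient f x = -(Matrix.toEuclideanLin H⁻¹ d) := by
    rw [hd, map_neg, hinv, neg_neg]
  set s : ℝ := ⟪d, Matrix.toEuclideanLin H⁻¹ d⟫ with hsdef
  have hgd : ⟪gradient f x, d⟫ = -s := by
    rw [hg, inner_neg_left, hsdef, real_inner_comm]
  have hs : L_g / (2 - η₁) * ‖d‖^2 ≤ s :=
    quad_lower_aux n H⁻¹ hH.inv.1 (L_g / (2 - η₁)) heig d
  have hdesc := descent_aux n f hf x d L_g hlip
  have h2η : (0:ℝ) < 2 - η₁ := by linarith
  have hs' : L_g * ‖d‖^2 ≤ (2 - η₁) * s := by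
    rw [div_mul_eq_mul_div, div_le_iff₀ h2η] at hs
    linarith [hs]
  rw [hq, hgd]
  rw [hgd] at hdesc
  nlinarith [hdesc, hs', hη₁, hη₁']
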